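/- arXiv:1010.2956 — 5 statements merged into one kernel-verified Lean document; each statement's English description precedes it below -/
import Mathlib

section
/- (Discrete nabla Dubois–Reymond lemma) Let a, b ∈ ℤ with a < b, and let f : ℤ → ℝ. If ∑_{t=a+1}^{b} f(t) · (η(t) − η(t−1)) = 0 for every η : ℤ → ℝ with η(a) = η(b) = 0, then there is a constant c ∈ ℝ with f(t) = c for all t with a+1 ≤ t ≤ b. -/
/-- Discrete nabla Dubois–Reymond lemma on ℤ. -/
theorem discrete_nabla_duboisReymond (a b : ℤ) (hab : a < b) (f : ℤ → ℝ)
    (h : ∀ η : ℤ → ℝ, η a = 0 → η b = 0 →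
      ∑ t ∈ Finset.Icc (a + 1) b, f t * (η t - η (t - 1)) = 0) :
    ∃ c : ℝ, ∀ t : ℤ, a + 1 ≤ t → t ≤ b → f t = c := by
  refine ⟨f b, fun s hs1 hs2 => ?_⟩
  rcases eq_or_lt_of_le hs2 with rfl | hsb
  · rfl
  -- use η = indicator of [s, b-1]
  set η : ℤ → ℝ := fun t => if s ≤ t ∧ t ≤ b - 1 then 1 else 0 with hη
  have ha0 : η a = 0 := by simp only [hη]; rw [if_neg]; omega
  have hb0 : η b = 0 := by simp only [hη]; rw [if_neg]; omega
  have key := h η ha0 hb0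
  have hsum : ∑ t ∈ Finset.Icc (a + 1) b, f t * (η t - η (t - 1))
      = ∑ t ∈ Finset.Icc (a + 1) b,
        ((if t = s then f s else 0) - (if t = b then f b else 0)) := by
    apply Finset.sum_congr rfl
    intro t ht
    rw [Finset.mem_Icc] at ht
    simp only [hη]
    by_cases h1 : t = s
    · subst h1
      rw [if_pos ⟨le_refl _, by omega⟩, if_neg (by omega), if_pos rfl, if_neg (by omega)]
      ring
    · by_cases h2 : t = b
      · subst h2
        rw [if_neg (by omega), if_pos ⟨by omega, by omega⟩, if_neg h1, if_pos rfl]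
        ring
      · have : (if s ≤ t ∧ t ≤ b - 1 then (1:ℝ) else 0)
            = (if s ≤ t - 1 ∧ t - 1 ≤ b - 1 then (1:ℝ) else 0) := by
          by_cases h3 : s ≤ t ∧ t ≤ b - 1
          · rw [if_pos h3, if_pos ⟨by omega, by omega⟩]
          · rw [if_neg h3, if_neg (by omega)]
        rw [this, if_neg h1, if_neg h2]
        ring
  rw [hsum, Finset.sum_sub_distrib, Finset.sum_ite_eq' _ s,
    Finset.sum_ite_eq' _ b, if_pos (Finset.mem_Icc.mpr ⟨hs1, hs2⟩),
    if_pos (Finset.mem_Icc.mpr ⟨by omega, le_refl _⟩)] at key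
  linarith
end

section
/- Let a, b ∈ ℤ with a < b and f, g : ℤ → ℝ. If for every η : ℤ → ℝ with η(a) = η(b) = 0 we have ∑_{t=a}^{b−1} f(t)·(η(t+1)−η(t)) + ∑_{t=a+1}^{b} g(t)·(η(t)−η(t−1)) = 0, then there exists a constant c ∈ ℝ with f(t−1) + g(t) = c for all a+1 ≤ t ≤ b. -/
/-- Combined discrete delta-nabla Dubois–Reymond lemma on ℤ. -/
theorem delta_nabla_duboisReymond (a b : ℤ) (hab : a < b) (f g : ℤ → ℝ)
    (h : ∀ η : ℤ → ℝ, η a = 0 → η b = 0 →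
      (∑ t ∈ Finset.Ico a b, f t * (η (t + 1) - η t))
        + (∑ t ∈ Finset.Icc (a + 1) b, g t * (η t - η (t - 1))) = 0) :
    ∃ c : ℝ, ∀ t : ℤ, a + 1 ≤ t → t ≤ b → f (t - 1) + g t = c := by
  have key : ∀ η : ℤ → ℝ, η a = 0 → η b = 0 →
      ∑ t ∈ Finset.Icc (a + 1) b, (f (t - 1) + g t) * (η t - η (t - 1)) = 0 := by
    intro η ha hb
    have h1 := h η ha hb
    have h2 : ∑ t ∈ Finset.Ico a b, f t * (η (t + 1) - η t)
        = ∑ t ∈ Finset.Icc (a + 1) b, f (t - 1) * (η t - η (t - 1)) := by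
      refine Finset.sum_nbij' (fun t => t + 1) (fun t => t - 1) ?_ ?_ ?_ ?_ ?_ <;>
        intro x hx <;> simp only [Finset.mem_Ico, Finset.mem_Icc] at * <;>
        first
        | omega
        | (norm_num)
    rw [h2, ← Finset.sum_add_distrib] at h1
    rw [← h1]
    apply Finset.sum_congr rfl
    intro t _
    ring
  refine ⟨f a + g (a + 1), fun t h1 h2 => ?_⟩
  rcases eq_or_lt_of_le h1 with heq | hlt
  · rw [← heq]; norm_num
  · set η : ℤ → ℝ := fun x => if a + 1 ≤ x ∧ x ≤ t - 1 then 1 else 0 with hη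
    have hk := key η (by simp [hη]; try omega) (by simp [hη]; try omega)
    have hsum : ∑ s ∈ Finset.Icc (a + 1) b, (f (s - 1) + g s) * (η s - η (s - 1))
        = (f a + g (a + 1)) - (f (t - 1) + g t) := by
      have hpt : ∀ s ∈ Finset.Icc (a + 1) b,
          (f (s - 1) + g s) * (η s - η (s - 1))
          = (if s = a + 1 then (f (s - 1) + g s) else 0)
            - (if s = t then (f (s - 1) + g s) else 0) := by
        intro s hs
        simp only [Finset.mem_Icc] at hs
        simp only [hη]
        split_ifs <;> first | ring1 | (exfalso; omega)
      rw [Finset.sum_congr rfl hpt, Finset.sum_sub_distrib,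
        Finset.sum_ite_eq' (Finset.Icc (a + 1) b) (a + 1),
        Finset.sum_ite_eq' (Finset.Icc (a + 1) b) t]
      have h3 : a + 1 ∈ Finset.Icc (a + 1) b := by simp [Finset.mem_Icc]; omega
      have h4 : t ∈ Finset.Icc (a + 1) b := by simp [Finset.mem_Icc]; omega
      rw [if_pos h3, if_pos h4]
      norm_num
    rw [hsum] at hk
    linarith
end

section
/- (Classical Dubois–Reymond lemma) Let f : [a,b] → ℝ be continuous. If ∫_a^b f(t)·η'(t) dt = 0 for every continuously differentiable η : [a,b] → ℝ with η(a) = η(b) = 0, then f is constant on [a,b]. -/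
/-- Classical Dubois–Reymond lemma. -/
theorem classical_duboisReymond (a b : ℝ) (hab : a < b) (f : ℝ → ℝ)
    (hf : ContinuousOn f (Set.Icc a b))
    (h : ∀ η : ℝ → ℝ, ContDiff ℝ 1 η → η a = 0 → η b = 0 →
      ∫ t in a..b, f t * deriv η t = 0) :
    ∃ c : ℝ, ∀ t ∈ Set.Icc a b, f t = c := by
  -- continuous global extension of f
  set g : ℝ → ℝ := Set.IccExtend hab.le (fun x : Set.Icc a b => f x) with hg_def
  have hg : Continuous g := (hf.restrict).Icc_extend'
  have hgf : ∀ t ∈ Set.Icc a b, g t = f t := by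
    intro t ht
    simp [hg_def, Set.IccExtend_of_mem hab.le _ ht]
  set c : ℝ := (∫ t in a..b, g t) / (b - a) with hc_def
  refine ⟨c, ?_⟩
  have hsub : Continuous (fun t => g t - c) := hg.sub continuous_const
  -- the test function
  set η : ℝ → ℝ := fun t => ∫ s in a..t, (g s - c) with hη_def
  have hderiv : ∀ t, HasDerivAt η (g t - c) t := by
    intro t
    exact intervalIntegral.integral_hasDerivAt_right
      (hsub.intervalIntegrable _ _)
      (hsub.stronglyMeasurableAtFilter _ _) hsub.continuousAt
  have hηderiv : deriv η = fun t => g t - c := funext fun t => (hderiv t).deriv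
  have hηC1 : ContDiff ℝ 1 η := by
    rw [contDiff_one_iff_deriv]
    exact ⟨fun t => (hderiv t).differentiableAt, by rw [hηderiv]; exact hsub⟩
  have hηa : η a = 0 := by simp [hη_def]
  have hηb : η b = 0 := by
    have : ∫ s in a..b, (g s - c) = 0 := by
      rw [intervalIntegral.integral_sub (hg.intervalIntegrable _ _)
        (intervalIntegrable_const)]
      simp [hc_def, mul_div_cancel₀, ne_of_gt (sub_pos.mpr hab)]
    simpa [hη_def] using this
  have key : ∫ t in a..b, f t * (g t - c) = 0 := by
    have := h η hηC1 hηa hηb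
    rwa [hηderiv] at this
  -- replace f by g in the integral
  have key' : ∫ t in a..b, g t * (g t - c) = 0 := by
    rw [← key]
    apply intervalIntegral.integral_congr
    intro t ht
    rw [Set.uIcc_of_le hab.le] at ht
    simp only [hgf t ht]
  -- ∫ (g-c)^2 = 0
  have hcsub : ∫ t in a..b, c * (g t - c) = 0 := by
    rw [intervalIntegral.integral_const_mul,
      intervalIntegral.integral_sub (hg.intervalIntegrable _ _) intervalIntegrable_const]
    simp [hc_def, mul_div_cancel₀, ne_of_gt (sub_pos.mpr hab)]
  have hsq : ∫ t in a..b, (g t - c) ^ 2 = 0 := by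
    have : ∀ t, (g t - c) ^ 2 = g t * (g t - c) - c * (g t - c) := by
      intro t; ring
    simp_rw [this]
    rw [intervalIntegral.integral_sub (f := fun t => g t * (g t - c)) (g := fun t => c * (g t - c))
      ((hg.mul hsub).intervalIntegrable _ _)
      ((continuous_const.mul hsub).intervalIntegrable _ _), key', hcsub, sub_zero]
  -- conclude g = c on Ioo a b
  have hIoo : ∀ t ∈ Set.Ioo a b, g t = c := by
    by_contra hcon
    push_neg at hcon
    obtain ⟨t, ht, hne⟩ := hcon
    have hne' : g t - c ≠ 0 := sub_ne_zero.mpr hne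
    have hpos : 0 < (g t - c) ^ 2 := by positivity
    -- (g-c)^2 is continuous, positive at t ∈ Ioo a b
    obtain ⟨ε, hε, hball'⟩ := Metric.continuousAt_iff.mp
      ((hsub.pow 2).continuousAt (x := t)) ((g t - c) ^ 2) hpos
    have hball : ∀ y : ℝ, dist y t < ε → 0 < (g y - c) ^ 2 := by
      intro y hy
      have := hball' hy
      rw [Real.dist_eq, abs_lt] at this
      simp only [Pi.pow_apply] at this
      linarith [this.1]
    set u := max a (t - ε / 2) with hu
    set v := min b (t + ε / 2) with hv
    have htu : u < t := by
      apply max_lt ht.1; linarith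
    have htv : t < v := by
      apply lt_min ht.2; linarith
    have hq : ∀ s, 0 ≤ (g s - c) ^ 2 := fun s => sq_nonneg _
    have hintpos : 0 < ∫ s in u..v, (g s - c) ^ 2 := by
      apply intervalIntegral.intervalIntegral_pos_of_pos_on
        ((hsub.pow 2).intervalIntegrable _ _)
      · intro x hx
        apply hball
        rw [Real.dist_eq, abs_lt]
        constructor
        · have : t - ε / 2 ≤ u := le_max_right _ _
          have := hx.1
          linarith
        · have : v ≤ t + ε / 2 := min_le_right _ _
          have := hx.2
          linarith
      · exact htu.trans htv
    have hau : a ≤ u := le_max_left _ _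
    have hvb : v ≤ b := min_le_left _ _
    have h1 : 0 ≤ ∫ s in a..u, (g s - c) ^ 2 :=
      intervalIntegral.integral_nonneg hau (fun s _ => hq s)
    have h2 : 0 ≤ ∫ s in v..b, (g s - c) ^ 2 :=
      intervalIntegral.integral_nonneg hvb (fun s _ => hq s)
    have hsplit : ∫ s in a..b, (g s - c) ^ 2 =
        (∫ s in a..u, (g s - c) ^ 2) + (∫ s in u..v, (g s - c) ^ 2)
          + ∫ s in v..b, (g s - c) ^ 2 := by
      rw [intervalIntegral.integral_add_adjacent_intervals (f := fun s => (g s - c) ^ 2)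
        ((hsub.pow 2).intervalIntegrable _ _) ((hsub.pow 2).intervalIntegrable _ _),
        intervalIntegral.integral_add_adjacent_intervals (f := fun s => (g s - c) ^ 2)
        ((hsub.pow 2).intervalIntegrable _ _) ((hsub.pow 2).intervalIntegrable _ _)]
    rw [hsq] at hsplit
    linarith
  -- extend to the closed interval by continuity
  have hIcc : ∀ t ∈ Set.Icc a b, g t = c := by
    have hcl : closure (Set.Ioo a b) = Set.Icc a b := closure_Ioo hab.ne
    have := (Set.EqOn.closure (fun t ht => hIoo t ht) hg continuous_const)
    intro t ht
    exact this (hcl ▸ ht)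
  intro t ht
  rw [← hgf t ht]
  exact hIcc t ht
end

section
/- (Discrete isoperimetric Lagrange multiplier rule, normal case) Let a, b ∈ ℤ with a+1 < b, and let m, f : {a,…,b} → ℝ. Suppose that for every η : ℤ → ℝ with η(a) = η(b) = 0 satisfying ∑_{t=a+1}^b f(t)·(η(t)−η(t−1)) = 0, we also have ∑_{t=a+1}^b m(t)·(η(t)−η(t−1)) = 0, and suppose f is not constant on {a+1,…,b}. Then there exist constants λ, c ∈ ℝ such that m(t) − λ·f(t) = c for all a+1 ≤ t ≤ b. -/
/-- Discrete isoperimetric Lagrange multiplier rule, normal case. -/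
theorem discrete_isoperimetric_normal (a b : ℤ) (hab : a + 1 < b) (m f : ℤ → ℝ)
    (h : ∀ η : ℤ → ℝ, η a = 0 → η b = 0 →
      (∑ t ∈ Finset.Icc (a + 1) b, f t * (η t - η (t - 1))) = 0 →
      (∑ t ∈ Finset.Icc (a + 1) b, m t * (η t - η (t - 1))) = 0)
    (hnc : ¬∃ c : ℝ, ∀ t ∈ Finset.Icc (a + 1) b, f t = c) :
    ∃ lam c : ℝ, ∀ t ∈ Finset.Icc (a + 1) b, m t - lam * f t = c := by
  -- Reduce the hypothesis to a statement about arbitrary ξ with zero sum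
  have key : ∀ ξ : ℤ → ℝ,
      (∑ t ∈ Finset.Icc (a+1) b, ξ t) = 0 →
      (∑ t ∈ Finset.Icc (a+1) b, f t * ξ t) = 0 →
      (∑ t ∈ Finset.Icc (a+1) b, m t * ξ t) = 0 := by
    intro ξ h0 hf
    set η : ℤ → ℝ := fun t => ∑ s ∈ Finset.Icc (a+1) t, ξ s with hη
    have hηa : η a = 0 := by
      simp [hη, Finset.Icc_eq_empty (by omega : ¬ a + 1 ≤ a)]
    have hηb : η b = 0 := h0
    have hΔ : ∀ t ∈ Finset.Icc (a+1) b, η t - η (t-1) = ξ t := by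
      intro t ht
      have h1 : a + 1 ≤ t := (Finset.mem_Icc.mp ht).1
      have hins : Finset.Icc (a+1) t = insert t (Finset.Icc (a+1) (t-1)) := by
        ext x
        simp only [Finset.mem_Icc, Finset.mem_insert]
        omega
      have hnot : t ∉ Finset.Icc (a+1) (t-1) := by
        simp only [Finset.mem_Icc]; omega
      have : η t = ξ t + η (t-1) := by
        simp only [hη, hins, Finset.sum_insert hnot]
      linarith
    have hf' : (∑ t ∈ Finset.Icc (a+1) b, f t * (η t - η (t-1))) = 0 := by
      rw [Finset.sum_congr rfl (fun t ht => by rw [hΔ t ht])]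
      exact hf
    have := h η hηa hηb hf'
    rw [Finset.sum_congr rfl (fun t ht => by rw [hΔ t ht])] at this
    exact this
  -- find two points where f differs
  push_neg at hnc
  obtain ⟨t2, ht2, hft2⟩ := hnc (f (a+1))
  set t1 : ℤ := a + 1 with ht1def
  have ht1 : t1 ∈ Finset.Icc (a+1) b := by
    simp only [Finset.mem_Icc]; omega
  have hD : f t1 - f t2 ≠ 0 := by
    intro hc
    apply hft2
    linarith
  set D : ℝ := f t1 - f t2 with hDdef
  refine ⟨(m t1 - m t2) / D, m t1 - (m t1 - m t2) / D * f t1, ?_⟩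
  intro t ht
  by_cases h1 : t = t1
  · subst h1; ring
  by_cases h2 : t = t2
  · subst h2
    field_simp
    ring
  -- general case: use a three-point variation
  set β : ℝ := (f t2 - f t) / D with hβ
  set γ : ℝ := (f t - f t1) / D with hγ
  set ξ : ℤ → ℝ := fun u =>
    (if u = t then (1:ℝ) else 0) + β * (if u = t1 then 1 else 0)
      + γ * (if u = t2 then 1 else 0) with hξ
  have hsum : ∀ g : ℤ → ℝ,
      (∑ u ∈ Finset.Icc (a+1) b, g u * ξ u) = g t + β * g t1 + γ * g t2 := by
    intro g
    simp only [hξ, mul_add, mul_ite, mul_one, mul_zero, Finset.sum_add_distrib]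
    rw [Finset.sum_ite_eq' _ t g, Finset.sum_ite_eq' _ t1 (fun u => g u * β),
      Finset.sum_ite_eq' _ t2 (fun u => g u * γ)]
    simp [ht, ht1, ht2, (by have := Finset.mem_Icc.mp ht; omega : a < t ∧ t ≤ b), (by have := Finset.mem_Icc.mp ht2; omega : a < t2 ∧ t2 ≤ b)]
    ring
  have h0 : (∑ u ∈ Finset.Icc (a+1) b, ξ u) = 0 := by
    have := hsum (fun _ => (1:ℝ))
    simp only [one_mul] at this
    rw [this, hβ, hγ]
    field_simp
    rw [hDdef]; ring
  have hfs : (∑ u ∈ Finset.Icc (a+1) b, f u * ξ u) = 0 := by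
    rw [hsum f, hβ, hγ]
    field_simp
    ring
  have hms := key ξ h0 hfs
  rw [hsum m] at hms
  rw [hβ, hγ] at hms
  field_simp at hms ⊢
  linear_combination hms
end

section
/- (Discrete isoperimetric multiplier rule, abnormal case included) Let a, b ∈ ℤ with a+1 < b and m, f : {a,…,b} → ℝ. Suppose that for every η : ℤ → ℝ with η(a) = η(b) = 0 and ∑_{t=a+1}^b f(t)·(η(t)−η(t−1)) = 0 we have ∑_{t=a+1}^b m(t)·(η(t)−η(t−1)) = 0. Then there exist λ₀, λ ∈ ℝ, not both zero, and c ∈ ℝ such that λ₀·m(t) − λ·f(t) = c for all a+1 ≤ t ≤ b. -/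
/-- Sum of `φ t * (χ_s t - χ_s (t-1))` over `Icc (a+1) b` equals `φ s - φ (s+1)`
for interior `s`. -/
lemma bump_sum (a b : ℤ) (φ : ℤ → ℝ) (s : ℤ) (hs1 : a + 1 ≤ s) (hs2 : s ≤ b - 1) :
    ∑ t ∈ Finset.Icc (a + 1) b,
      φ t * ((if t = s then (1:ℝ) else 0) - (if t - 1 = s then (1:ℝ) else 0))
      = φ s - φ (s + 1) := by
  have hcong : ∀ t ∈ Finset.Icc (a + 1) b,
      φ t * ((if t = s then (1:ℝ) else 0) - (if t - 1 = s then (1:ℝ) else 0))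
      = (if t = s then φ s else 0) - (if t = s + 1 then φ (s + 1) else 0) := by
    intro t _
    by_cases h1 : t = s
    · have h2 : ¬ (t = s + 1) := by omega
      have h3 : ¬ (t - 1 = s) := by omega
      simp [h1, h2, h3]
    · by_cases h2 : t = s + 1
      · have h3 : t - 1 = s := by omega
        simp [h1, h2, h3]
      · have h3 : ¬ (t - 1 = s) := by omega
        simp [h1, h2, h3]
  rw [Finset.sum_congr rfl hcong, Finset.sum_sub_distrib,
    Finset.sum_ite_eq' _ s, Finset.sum_ite_eq' _ (s + 1)]
  have h1 : s ∈ Finset.Icc (a + 1) b := by simp [Finset.mem_Icc]; omega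
  have h2 : s + 1 ∈ Finset.Icc (a + 1) b := by simp [Finset.mem_Icc]; omega
  rw [if_pos h1, if_pos h2]

/-- A function whose consecutive values agree on the interior is constant on `Icc (a+1) b`. -/
lemma const_of_diff (a b : ℤ) (F : ℤ → ℝ)
    (hd : ∀ s, a + 1 ≤ s → s ≤ b - 1 → F s = F (s + 1)) :
    ∀ t, a + 1 ≤ t → t ≤ b → F t = F (a + 1) := by
  refine Int.le_induction ?_ ?_
  · intro _; rfl
  · intro n hn ih hnb
    rw [← hd n hn (by omega)]
    exact ih (by omega)

/-- Discrete isoperimetric multiplier rule, abnormal case included. -/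
theorem discrete_isoperimetric_abnormal (a b : ℤ) (hab : a + 1 < b) (m f : ℤ → ℝ)
    (h : ∀ η : ℤ → ℝ, η a = 0 → η b = 0 →
      (∑ t ∈ Finset.Icc (a + 1) b, f t * (η t - η (t - 1))) = 0 →
      (∑ t ∈ Finset.Icc (a + 1) b, m t * (η t - η (t - 1))) = 0) :
    ∃ lam₀ lam : ℝ, (lam₀ ≠ 0 ∨ lam ≠ 0) ∧
      ∃ c : ℝ, ∀ t ∈ Finset.Icc (a + 1) b, lam₀ * m t - lam * f t = c := by
  -- Key: for interior s, s' and scalars α β, a two-bump variation computes to a combination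
  have key : ∀ (α β : ℝ) (s s' : ℤ), a + 1 ≤ s → s ≤ b - 1 → a + 1 ≤ s' → s' ≤ b - 1 →
      α * (f s - f (s + 1)) + β * (f s' - f (s' + 1)) = 0 →
      α * (m s - m (s + 1)) + β * (m s' - m (s' + 1)) = 0 := by
    intro α β s s' hs1 hs2 hs'1 hs'2 hcon
    set η : ℤ → ℝ := fun t =>
      α * (if t = s then (1:ℝ) else 0) + β * (if t = s' then (1:ℝ) else 0) with hη
    have expand : ∀ φ : ℤ → ℝ, ∑ t ∈ Finset.Icc (a + 1) b, φ t * (η t - η (t - 1))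
        = α * (φ s - φ (s + 1)) + β * (φ s' - φ (s' + 1)) := by
      intro φ
      have : ∀ t ∈ Finset.Icc (a + 1) b, φ t * (η t - η (t - 1))
          = α * (φ t * ((if t = s then (1:ℝ) else 0) - (if t - 1 = s then (1:ℝ) else 0)))
          + β * (φ t * ((if t = s' then (1:ℝ) else 0) - (if t - 1 = s' then (1:ℝ) else 0))) := by
        intro t _; simp only [hη]; ring
      rw [Finset.sum_congr rfl this, Finset.sum_add_distrib, ← Finset.mul_sum, ← Finset.mul_sum,
        bump_sum a b φ s hs1 hs2, bump_sum a b φ s' hs'1 hs'2]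
    have ha0 : η a = 0 := by
      simp only [hη]
      have h1 : ¬ (a = s) := by omega
      have h2 : ¬ (a = s') := by omega
      simp [h1, h2]
    have hb0 : η b = 0 := by
      simp only [hη]
      have h1 : ¬ (b = s) := by omega
      have h2 : ¬ (b = s') := by omega
      simp [h1, h2]
    have := h η ha0 hb0 (by rw [expand f]; exact hcon)
    rwa [expand m] at this
  by_cases hf : ∀ s, a + 1 ≤ s → s ≤ b - 1 → f s = f (s + 1)
  · -- f constant: then m constant, take lam₀ = 1, lam = 0
    have hm : ∀ s, a + 1 ≤ s → s ≤ b - 1 → m s = m (s + 1) := by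
      intro s hs1 hs2
      have := key 1 0 s s hs1 hs2 hs1 hs2 (by rw [hf s hs1 hs2]; ring)
      linarith
    refine ⟨1, 0, Or.inl one_ne_zero, m (a + 1), ?_⟩
    intro t ht
    rw [Finset.mem_Icc] at ht
    have := const_of_diff a b m hm t ht.1 ht.2
    simp [this]
  · push_neg at hf
    obtain ⟨s₀, hs₀1, hs₀2, hg⟩ := hf
    have hg0 : f s₀ - f (s₀ + 1) ≠ 0 := sub_ne_zero_of_ne hg
    set μ : ℝ := (m s₀ - m (s₀ + 1)) / (f s₀ - f (s₀ + 1)) with hμ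
    have hrel : ∀ s, a + 1 ≤ s → s ≤ b - 1 → m s - m (s + 1) = μ * (f s - f (s + 1)) := by
      intro s hs1 hs2
      have := key (f s - f (s + 1)) (-(f s₀ - f (s₀ + 1))) s₀ s hs₀1 hs₀2 hs1 hs2 (by ring)
      rw [hμ]
      field_simp
      nlinarith [this]
    have hconst : ∀ s, a + 1 ≤ s → s ≤ b - 1 →
        (fun t => m t - μ * f t) s = (fun t => m t - μ * f t) (s + 1) := by
      intro s hs1 hs2
      have := hrel s hs1 hs2
      simp only
      linarith
    refine ⟨1, μ, Or.inl one_ne_zero, m (a + 1) - μ * f (a + 1), ?_⟩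
    intro t ht
    rw [Finset.mem_Icc] at ht
    have := const_of_diff a b (fun t => m t - μ * f t) hconst t ht.1 ht.2
    simpa using this
end
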